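/- Mean fixed-budget lower bound: Fix s2 ≤ |I2| and s3 ≤ |I3| with |I1| + |I2| − s2 + s3 > 0. For any S2 ⊆ I2 with |I2\S2| = s2, any S3 ⊆ I3 with |S3| = s3, and any l ≤ x ≤ u, the mean of x over I1 ∪ S2 ∪ S3 is at least ( Σ_{i∈I1} l(i) + (sum of the (|I2| − s2) smallest lower bounds in I2) + (sum of the s3 smallest lower bounds in I3) ) / (|I1| + |I2| − s2 + s3); and this bound is tight. -/

import Mathlib

noncomputable def kthLargest (Y : Multiset ℝ) (i : ℕ) : ℝ :=
  ((Y.sort (· ≤ ·)).reverse).getD (i - 1) 0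

noncomputable def kthSmallest (Y : Multiset ℝ) (i : ℕ) : ℝ :=
  (Y.sort (· ≤ ·)).getD (i - 1) 0

/-- Mean of `x` over a finset (equal to `0` on the empty set, since `x/0 = 0` in `ℝ`). -/
noncomputable def meanF {ι : Type*} (S : Finset ι) (x : ι → ℝ) : ℝ :=
  (∑ i ∈ S, x i) / S.card

/-- Sum of the `k` largest values of `u` over `J`. -/
noncomputable def topSum {ι : Type*} (J : Finset ι) (u : ι → ℝ) (k : ℕ) : ℝ :=
  ∑ i ∈ Finset.range k, kthLargest (J.val.map u) (i + 1)

/-- Sum of the `k` smallest values of `l` over `J`. -/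
noncomputable def botSum {ι : Type*} (J : Finset ι) (l : ι → ℝ) (k : ℕ) : ℝ :=
  ∑ i ∈ Finset.range k, kthSmallest (J.val.map l) (i + 1)

lemma aux_exists_le_map {α β : Type*} [DecidableEq β] (f : α → β) :
    ∀ (s : Multiset α) (T : Multiset β), T ≤ s.map f → ∃ t ≤ s, t.map f = T := by
  intro s
  induction s using Multiset.induction with
  | empty =>
    intro T hT
    simp only [Multiset.map_zero, Multiset.le_zero] at hT
    exact ⟨0, le_refl _, by simp [hT]⟩
  | cons a s ih =>
    intro T hT
    rw [Multiset.map_cons] at hT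
    by_cases h : f a ∈ T
    · have h2 := Multiset.erase_le_erase (f a) hT
      rw [Multiset.erase_cons_head] at h2
      obtain ⟨t, ht, hmap⟩ := ih _ h2
      exact ⟨a ::ₘ t, Multiset.cons_le_cons a ht, by
        rw [Multiset.map_cons, hmap, Multiset.cons_erase h]⟩
    · obtain ⟨t, ht, hmap⟩ := ih T ((Multiset.le_cons_of_notMem h).1 hT)
      exact ⟨t, ht.trans (Multiset.le_cons_self s a), hmap⟩

lemma aux_sum_take_le {L L' : List ℝ} (h : List.Sublist L' L) (hL : L.Pairwise (· ≤ ·)) :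
    (L.take L'.length).sum ≤ L'.sum := by
  induction h with
  | slnil => simp
  | @cons l₁ l₂ a h ih =>
    have hs : l₂.Pairwise (· ≤ ·) := hL.of_cons
    have ih' := ih hs
    rcases Nat.eq_zero_or_pos l₁.length with hn | hn
    · rw [hn]; simp
      have : l₁ = [] := List.length_eq_zero_iff.1 hn
      simp [this]
    · obtain ⟨n, hlen⟩ : ∃ n, l₁.length = n + 1 := ⟨l₁.length - 1, by omega⟩
      have hn2 : n < l₂.length := by have := h.length_le; omega
      have key : a ≤ l₂[n] := List.rel_of_pairwise_cons hL (List.getElem_mem hn2)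
      rw [hlen, List.take_succ_cons, List.sum_cons]
      rw [hlen, List.take_succ, List.sum_append, List.getElem?_eq_getElem hn2] at ih'
      simp only [Option.toList_some, List.sum_cons, List.sum_nil, add_zero] at ih'
      linarith
  | @cons_cons l₁ l₂ a h ih =>
    have ih' := ih hL.of_cons
    simpa using by linarith [ih']

lemma aux_sort_sublist {T M : Multiset ℝ} (h : T ≤ M) :
    List.Sublist (T.sort (· ≤ ·)) (M.sort (· ≤ ·)) := by
  apply List.sublist_of_subperm_of_pairwise _ (Multiset.pairwise_sort _ _) (Multiset.pairwise_sort _ _)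
  rw [← Multiset.coe_le, Multiset.sort_eq, Multiset.sort_eq]
  exact h

lemma aux_sum_range_getD (L : List ℝ) : ∀ k, k ≤ L.length →
    ∑ i ∈ Finset.range k, L.getD i 0 = (L.take k).sum := by
  intro k
  induction k with
  | zero => simp
  | succ n ih =>
    intro hk
    have hn : n < L.length := hk
    rw [Finset.sum_range_succ, ih (le_of_lt hn), List.take_succ, List.sum_append,
      List.getElem?_eq_getElem hn, List.getD_eq_getElem L 0 hn]
    simp

lemma botSum_eq_take {ι : Type*} (J : Finset ι) (l : ι → ℝ) (k : ℕ) (hk : k ≤ J.card) :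
    botSum J l k = (((J.val.map l).sort (· ≤ ·)).take k).sum := by
  unfold botSum kthSmallest
  simp only [Nat.add_sub_cancel]
  apply aux_sum_range_getD
  rw [Multiset.length_sort, Multiset.card_map]
  exact hk

lemma sum_finset_eq_map {ι : Type*} (S : Finset ι) (l : ι → ℝ) :
    ∑ i ∈ S, l i = (S.val.map l).sum := rfl

lemma sort_sum (M : Multiset ℝ) : (M.sort (· ≤ ·)).sum = M.sum := by
  rw [← Multiset.sum_coe, Multiset.sort_eq]

lemma botSum_le_sum {ι : Type*} (J : Finset ι) (l : ι → ℝ) (S : Finset ι) (hS : S ⊆ J) :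
    botSum J l S.card ≤ ∑ i ∈ S, l i := by
  have hT : (S.val.map l) ≤ (J.val.map l) := Multiset.map_le_map (Finset.val_le_iff.2 hS)
  have hsub := aux_sort_sublist hT
  have hlen : ((S.val.map l).sort (· ≤ ·)).length = S.card := by
    rw [Multiset.length_sort, Multiset.card_map]; rfl
  have h1 := aux_sum_take_le hsub (Multiset.pairwise_sort _ _)
  rw [hlen] at h1
  rw [botSum_eq_take J l S.card (Finset.card_le_card hS), sum_finset_eq_map]
  calc (((J.val.map l).sort (· ≤ ·)).take S.card).sum
      ≤ ((S.val.map l).sort (· ≤ ·)).sum := h1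
    _ = (S.val.map l).sum := sort_sum _

lemma exists_botSum {ι : Type*} [DecidableEq ι] (J : Finset ι) (l : ι → ℝ) (k : ℕ)
    (hk : k ≤ J.card) : ∃ S ⊆ J, S.card = k ∧ ∑ i ∈ S, l i = botSum J l k := by
  classical
  set M := J.val.map l with hM
  set L := M.sort (· ≤ ·) with hL
  have hlenL : L.length = J.card := by rw [hL, Multiset.length_sort, hM, Multiset.card_map]; rfl
  have hTM : (↑(L.take k) : Multiset ℝ) ≤ M := by
    calc (↑(L.take k) : Multiset ℝ) ≤ ↑L := (List.take_sublist _ _).subperm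
      _ = M := Multiset.sort_eq _ _
  obtain ⟨t, ht, hmap⟩ := aux_exists_le_map l J.val _ hTM
  have hnd : t.Nodup := Multiset.nodup_of_le ht J.nodup
  refine ⟨⟨t, hnd⟩, Finset.val_le_iff.1 ht, ?_, ?_⟩
  · have hc : (t.map l).card = k := by
      rw [hmap, Multiset.coe_card, List.length_take, hlenL]
      omega
    rw [Multiset.card_map] at hc
    exact hc
  · rw [sum_finset_eq_map, botSum_eq_take J l k hk]
    show (t.map l).sum = _
    rw [hmap, Multiset.sum_coe]

/-- Mean fixed-budget lower bound, with tightness. -/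
theorem stmt9 {ι : Type*} [DecidableEq ι] (I1 I2 I3 : Finset ι)
    (h12 : Disjoint I1 I2) (h13 : Disjoint I1 I3) (h23 : Disjoint I2 I3)
    (l u : ι → ℝ) (hlu : ∀ i ∈ I1 ∪ I2 ∪ I3, l i ≤ u i)
    (s2 s3 : ℕ) (hs2 : s2 ≤ I2.card) (hs3 : s3 ≤ I3.card)
    (hpos : 0 < I1.card + I2.card - s2 + s3) :
    (∀ S2 ⊆ I2, ∀ S3 ⊆ I3, (I2 \ S2).card = s2 → S3.card = s3 →
      ∀ x : ι → ℝ, (∀ i ∈ I1 ∪ I2 ∪ I3, l i ≤ x i ∧ x i ≤ u i) →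
        ((∑ i ∈ I1, l i) + botSum I2 l (I2.card - s2) + botSum I3 l s3) /
            ((I1.card + I2.card - s2 + s3 : ℕ) : ℝ) ≤ meanF (I1 ∪ S2 ∪ S3) x) ∧
    (∃ S2 ⊆ I2, ∃ S3 ⊆ I3, (I2 \ S2).card = s2 ∧ S3.card = s3 ∧
      ∃ x : ι → ℝ, (∀ i ∈ I1 ∪ I2 ∪ I3, l i ≤ x i ∧ x i ≤ u i) ∧
        meanF (I1 ∪ S2 ∪ S3) x =
          ((∑ i ∈ I1, l i) + botSum I2 l (I2.card - s2) + botSum I3 l s3) /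
            ((I1.card + I2.card - s2 + s3 : ℕ) : ℝ)) := by
  have hNpos : (0:ℝ) < ((I1.card + I2.card - s2 + s3 : ℕ) : ℝ) := by exact_mod_cast hpos
  constructor
  · intro S2 hS2 S3 hS3 hc2 hc3 x hx
    have hS2le : S2.card ≤ I2.card := Finset.card_le_card hS2
    have hS2card : S2.card = I2.card - s2 := by
      rw [Finset.card_sdiff_of_subset hS2] at hc2; omega
    have hd1 : Disjoint I1 S2 := h12.mono_right hS2
    have hd2 : Disjoint (I1 ∪ S2) S3 :=
      Finset.disjoint_union_left.2 ⟨h13.mono_right hS3, h23.mono hS2 hS3⟩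
    have hcard : (I1 ∪ S2 ∪ S3).card = I1.card + I2.card - s2 + s3 := by
      rw [Finset.card_union_of_disjoint hd2, Finset.card_union_of_disjoint hd1]
      omega
    have b1 : ∑ i ∈ I1, l i ≤ ∑ i ∈ I1, x i :=
      Finset.sum_le_sum fun i hi =>
        (hx i (Finset.mem_union_left _ (Finset.mem_union_left _ hi))).1
    have b2 : botSum I2 l (I2.card - s2) ≤ ∑ i ∈ S2, x i := by
      calc botSum I2 l (I2.card - s2) = botSum I2 l S2.card := by rw [hS2card]
        _ ≤ ∑ i ∈ S2, l i := botSum_le_sum I2 l S2 hS2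
        _ ≤ ∑ i ∈ S2, x i := Finset.sum_le_sum fun i hi =>
            (hx i (Finset.mem_union_left _ (Finset.mem_union_right _ (hS2 hi)))).1
    have b3 : botSum I3 l s3 ≤ ∑ i ∈ S3, x i := by
      calc botSum I3 l s3 = botSum I3 l S3.card := by rw [hc3]
        _ ≤ ∑ i ∈ S3, l i := botSum_le_sum I3 l S3 hS3
        _ ≤ ∑ i ∈ S3, x i := Finset.sum_le_sum fun i hi =>
            (hx i (Finset.mem_union_right _ (hS3 hi))).1
    unfold meanF
    rw [hcard]
    have hnum : (∑ i ∈ I1, l i) + botSum I2 l (I2.card - s2) + botSum I3 l s3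
        ≤ ∑ i ∈ I1 ∪ S2 ∪ S3, x i := by
      rw [Finset.sum_union hd2, Finset.sum_union hd1]; linarith
    gcongr
  · obtain ⟨S2, hS2, hc2, hsum2⟩ := exists_botSum I2 l (I2.card - s2) (Nat.sub_le _ _)
    obtain ⟨S3, hS3, hc3, hsum3⟩ := exists_botSum I3 l s3 hs3
    have hd1 : Disjoint I1 S2 := h12.mono_right hS2
    have hd2 : Disjoint (I1 ∪ S2) S3 :=
      Finset.disjoint_union_left.2 ⟨h13.mono_right hS3, h23.mono hS2 hS3⟩
    have hcard : (I1 ∪ S2 ∪ S3).card = I1.card + I2.card - s2 + s3 := by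
      rw [Finset.card_union_of_disjoint hd2, Finset.card_union_of_disjoint hd1]
      omega
    refine ⟨S2, hS2, S3, hS3, ?_, hc3, l, fun i hi => ⟨le_refl _, hlu i hi⟩, ?_⟩
    · rw [Finset.card_sdiff_of_subset hS2, hc2]; omega
    · unfold meanF
      rw [hcard, Finset.sum_union hd2, Finset.sum_union hd1, hsum2, hsum3]
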